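/- arXiv:0911.3833 — 4 statements merged into one kernel-verified Lean document; each statement's English description precedes it below -/
import Mathlib

section
/- Let (R, ≤, r) be a triple where R is metrically closed (as a subspace of AR^ℕ, AR discrete) and satisfies axioms A.1–A.6 of topological Ramsey space theory. Then for every family F ⊆ AR of approximations and every A ∈ R, there exists B ≤ A such that either no approximation of any C ≤ B belongs to F, or for every C ≤ B there exists n with r_n(C) ∈ F. -/
/-- A triple `(R, ≤, r)`: a set `R`, a quasi-order `≤` on it, and an approximation
function `r : ℕ × R → AR` with range `AR`, together with a finitization quasi-order
`≤_fin` on `AR`. -/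
structure RSpace where
  R : Type
  AR : Type
  le : R → R → Prop
  le_refl : ∀ A, le A A
  le_trans : ∀ A B C, le A B → le B C → le A C
  r : ℕ → R → AR
  lefin : AR → AR → Prop
  lefin_refl : ∀ a, lefin a a
  lefin_trans : ∀ a b c, lefin a b → lefin b c → lefin a c
  r_surj : ∀ a : AR, ∃ n A, r n A = a

namespace RSpace

variable (S : RSpace)

/-- The Ellentuck neighborhood `[a, A] = {B ≤ A : ∃ n, r_n(B) = a}`. -/
def nbhd (a : S.AR) (A : S.R) : Set S.R := {B | S.le B A ∧ ∃ n, S.r n B = a}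

/-- `AR(A) = {a ∈ AR : [a, A] ≠ ∅}`. -/
def ARof (A : S.R) : Set S.AR := {a | (S.nbhd a A).Nonempty}

/-- `depth_A(a) = n`: `n` is least with `a ≤_fin r_n(A)`. -/
def IsDepth (A : S.R) (a : S.AR) (n : ℕ) : Prop :=
  S.lefin a (S.r n A) ∧ ∀ i < n, ¬ S.lefin a (S.r i A)

/-- (A.1) `r_0(A) = ∅` for all `A`. -/
def A1 : Prop := ∀ A B, S.r 0 A = S.r 0 B

/-- (A.2) distinct elements have some distinct approximation. -/
def A2 : Prop := ∀ A B, A ≠ B → ∃ n, S.r n A ≠ S.r n B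

/-- (A.3) `r_n(A) = r_m(B)` implies `n = m` and `r_i(A) = r_i(B)` for all `i < n`. -/
def A3 : Prop := ∀ A B n m, S.r n A = S.r m B → n = m ∧ ∀ i < n, S.r i A = S.r i B

/-- (A.4)(i) finitization: `A ≤ B` iff every approximation of `A` is `≤_fin` some
approximation of `B`. -/
def A4i : Prop := ∀ A B, S.le A B ↔ ∀ n, ∃ m, S.lefin (S.r n A) (S.r m B)

/-- (A.4)(ii) each `≤_fin`-downward cone is finite. -/
def A4ii : Prop := ∀ a : S.AR, {b | S.lefin b a}.Finite

/-- (A.5) amalgamation. -/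
def A5 : Prop := ∀ (a : S.AR) (A : S.R) (n : ℕ), S.IsDepth A a n →
  (∀ B ∈ S.nbhd (S.r n A) A, (S.nbhd a B).Nonempty) ∧
  (∀ B ∈ S.nbhd a A, ∃ A' ∈ S.nbhd (S.r n A) A, S.nbhd a A' ⊆ S.nbhd a B)

/-- (A.6) abstract pigeonhole: if `depth_A(a) = n` and `|a| = l`, then for every
`O ⊆ AR` there is `B ∈ [n, A]` with `r_{l+1}[a, B] ⊆ O` or `r_{l+1}[a, B] ⊆ Oᶜ`. -/
def A6 : Prop := ∀ (a : S.AR) (A : S.R) (n l : ℕ), S.IsDepth A a n →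
  (∃ C, S.r l C = a) →
  ∀ O : Set S.AR, ∃ B ∈ S.nbhd (S.r n A) A,
    (∀ b : S.AR, (∃ C ∈ S.nbhd a B, S.r (l + 1) C = b) → b ∈ O) ∨
    (∀ b : S.AR, (∃ C ∈ S.nbhd a B, S.r (l + 1) C = b) → b ∉ O)

/-- `R` is metrically closed as a subspace of `AR^ℕ` (identifying each `A ∈ R` with its
sequence of approximations): every sequence of approximations all of whose initial
segments come from elements of `R` is itself the approximation sequence of an element. -/
def MetricallyClosed : Prop :=
  ∀ f : ℕ → S.AR, (∀ n, ∃ A, ∀ i ≤ n, S.r i A = f i) → ∃ A, ∀ n, S.r n A = f n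

/-- `(R, ≤, r)` is metrically closed and satisfies axioms (A.1)–(A.6). -/
def Axioms : Prop :=
  S.A1 ∧ S.A2 ∧ S.A3 ∧ S.A4i ∧ S.A4ii ∧ S.A5 ∧ S.A6 ∧ S.MetricallyClosed

end RSpace

namespace RSpace

variable (S : RSpace)

lemma nbhd_mono {a : S.AR} {B C : S.R} (h : S.le C B) : S.nbhd a C ⊆ S.nbhd a B :=
  fun D hD => ⟨S.le_trans _ _ _ hD.1 h, hD.2⟩

/-- `B` accepts `a` (relative to `F`). -/
def acc (F : Set S.AR) (B : S.R) (a : S.AR) : Prop :=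
  ∀ C ∈ S.nbhd a B, ∃ n, S.r n C ∈ F

/-- `B` rejects `a` (relative to `F`). -/
def rej (F : Set S.AR) (B : S.R) (a : S.AR) : Prop :=
  ∀ B', S.le B' B → (S.nbhd a B').Nonempty → ¬ S.acc F B' a

lemma acc_mono (F : Set S.AR) {B C : S.R} {a : S.AR} (h : S.le C B) :
    S.acc F B a → S.acc F C a :=
  fun hacc D hD => hacc D (S.nbhd_mono h hD)

lemma rej_mono (F : Set S.AR) {B C : S.R} {a : S.AR} (h : S.le C B) :
    S.rej F B a → S.rej F C a :=
  fun hrej B' hB' => hrej B' (S.le_trans _ _ _ hB' h)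

lemma exists_isDepth {a : S.AR} {A : S.R} (h : ∃ m, S.lefin a (S.r m A)) :
    ∃ n, S.IsDepth A a n := by
  classical
  exact ⟨Nat.find h, Nat.find_spec h, fun i hi => Nat.find_min h hi⟩

lemma isDepth_congr {a : S.AR} {A B : S.R} {n : ℕ} (h : ∀ i ≤ n, S.r i A = S.r i B)
    (hd : S.IsDepth A a n) : S.IsDepth B a n := by
  constructor
  · rw [← h n le_rfl]; exact hd.1
  · intro i hi; rw [← h i hi.le]; exact hd.2 i hi

lemma nbhd_r (h3 : S.A3) {D' D : S.R} {k : ℕ} (h : D' ∈ S.nbhd (S.r k D) D) :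
    S.le D' D ∧ S.r k D' = S.r k D := by
  obtain ⟨hle, m, hm⟩ := h
  obtain ⟨rfl, -⟩ := h3 D' D m k hm
  exact ⟨hle, hm⟩

/-- Fix a level and decide: there is `D ∈ [depth, C]` accepting or rejecting `a`. -/
lemma decide_at_depth (F : Set S.AR) (h5 : S.A5) (a : S.AR) (C : S.R) (n : ℕ)
    (hd : S.IsDepth C a n) :
    ∃ D ∈ S.nbhd (S.r n C) C, S.acc F D a ∨ S.rej F D a := by
  by_cases h : ∃ B', S.le B' C ∧ (S.nbhd a B').Nonempty ∧ S.acc F B' a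
  · obtain ⟨B', hB'C, ⟨E, hE⟩, hacc⟩ := h
    have hEC : E ∈ S.nbhd a C := ⟨S.le_trans _ _ _ hE.1 hB'C, hE.2⟩
    obtain ⟨A', hA', hsub⟩ := (h5 a C n hd).2 E hEC
    refine ⟨A', hA', Or.inl fun C' hC' => hacc C' ?_⟩
    have h2 := hsub hC'
    exact ⟨S.le_trans _ _ _ h2.1 hE.1, h2.2⟩
  · push_neg at h
    exact ⟨C, ⟨S.le_refl C, n, rfl⟩, Or.inr fun B' hB' hne => h B' hB' hne⟩

/-- If `Bs` decides everything it realizes and rejects `a`, we can shrink so that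
all one-step extensions of `a` are rejected as well. -/
lemma reject_step (F : Set S.AR) (h3 : S.A3) (h5 : S.A5) (h6 : S.A6) (Bs : S.R)
    (hdec : ∀ b ∈ S.ARof Bs, S.acc F Bs b ∨ S.rej F Bs b)
    (a : S.AR) (C : S.R) (n : ℕ) (hCB : S.le C Bs) (hd : S.IsDepth C a n)
    (hne : (S.nbhd a C).Nonempty) (hrej : S.rej F Bs a) :
    ∃ D ∈ S.nbhd (S.r n C) C,
      ∀ C' ∈ S.nbhd a D, ∀ l, S.r l C' = a → S.rej F Bs (S.r (l + 1) C') := by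
  obtain ⟨E, hEC, l, hEl⟩ := hne
  obtain ⟨D, hD, hcase⟩ := h6 a C n l hd ⟨E, hEl⟩ {b | S.acc F Bs b}
  rcases hcase with hpos | hneg
  · exfalso
    have hDB : S.le D Bs := S.le_trans _ _ _ hD.1 hCB
    have hacc : S.acc F D a := by
      intro C' hC'
      have hb : S.acc F Bs (S.r (l + 1) C') := hpos _ ⟨C', hC', rfl⟩
      exact hb C' ⟨S.le_trans _ _ _ hC'.1 hDB, l + 1, rfl⟩
    exact hrej D hDB ((h5 a C n hd).1 D hD) hacc
  · refine ⟨D, hD, fun C' hC' l' hl' => ?_⟩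
    obtain ⟨rfl, -⟩ := h3 C' E l' l (hl'.trans hEl.symm)
    have hb := hneg (S.r (l' + 1) C') ⟨C', hC', rfl⟩
    have hmem : S.r (l' + 1) C' ∈ S.ARof Bs :=
      ⟨C', ⟨S.le_trans _ _ _ hC'.1 (S.le_trans _ _ _ hD.1 hCB), l' + 1, rfl⟩⟩
    rcases hdec _ hmem with h | h
    · exact absurd h hb
    · exact h

/-- Finite inner induction: handle finitely many `a`'s at a fixed level `k`. -/
lemma inner (k : ℕ) (C : S.R) (P : S.AR → S.R → Prop)
    (Pmono : ∀ a D D', S.le D' D → P a D → P a D') :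
    ∀ s : Set S.AR, s.Finite →
      (∀ a ∈ s, ∀ D, S.le D C → S.r k D = S.r k C →
        ∃ D', S.le D' D ∧ S.r k D' = S.r k D ∧ P a D') →
      ∃ D, S.le D C ∧ S.r k D = S.r k C ∧ ∀ a ∈ s, P a D := by
  intro s hs
  refine Set.Finite.induction_on
    (motive := fun s _ => (∀ a ∈ s, ∀ D, S.le D C → S.r k D = S.r k C →
        ∃ D', S.le D' D ∧ S.r k D' = S.r k D ∧ P a D') →
      ∃ D, S.le D C ∧ S.r k D = S.r k C ∧ ∀ a ∈ s, P a D) s hs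
    (fun _ => ⟨C, S.le_refl C, rfl, fun a ha => ha.elim⟩) ?_
  intro a s ha hs ih hstep
  obtain ⟨D, hDC, hDr, hP⟩ := ih fun b hb => hstep b (Set.mem_insert_of_mem _ hb)
  obtain ⟨D', h1, h2, h3⟩ := hstep a (Set.mem_insert _ _) D hDC hDr
  refine ⟨D', S.le_trans _ _ _ h1 hDC, h2.trans hDr, fun b hb => ?_⟩
  rcases Set.mem_insert_iff.mp hb with rfl | hb
  · exact h3
  · exact Pmono _ _ _ h1 (hP _ hb)

/-- Build a fusion chain. -/
lemma chain (A0 : S.R) (Φ : ℕ → S.R → S.R → Prop)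
    (step : ∀ k C, ∃ D, S.le D C ∧ S.r k D = S.r k C ∧ Φ k C D) :
    ∃ f : ℕ → S.R, f 0 = A0 ∧
      ∀ k, S.le (f (k + 1)) (f k) ∧ S.r k (f (k + 1)) = S.r k (f k) ∧ Φ k (f k) (f (k + 1)) := by
  choose g h1 h2 h3 using step
  refine ⟨fun k => Nat.rec A0 (fun k C => g k C) k, rfl, fun k => ⟨h1 _ _, h2 _ _, h3 _ _⟩⟩

/-- The limit of a fusion chain. -/
lemma fusion_limit (h3 : S.A3) (h4i : S.A4i) (hMC : S.MetricallyClosed)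
    (f : ℕ → S.R) (hle : ∀ k, S.le (f (k + 1)) (f k))
    (hr : ∀ k, S.r k (f (k + 1)) = S.r k (f k)) :
    ∃ B, (∀ k, S.le B (f k)) ∧ (∀ k, S.r k B = S.r k (f k)) ∧
      ∀ k i, i ≤ k → S.r i (f k) = S.r i (f i) := by
  have step : ∀ k i, i ≤ k → S.r i (f (k + 1)) = S.r i (f k) := by
    intro k i hi
    rcases Nat.eq_or_lt_of_le hi with rfl | h
    · exact hr _
    · exact (h3 _ _ _ _ (hr k)).2 i h
  have agree : ∀ k i, i ≤ k → S.r i (f k) = S.r i (f i) := by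
    intro k
    induction k with
    | zero => intro i hi; cases Nat.le_zero.mp hi; rfl
    | succ k ih =>
      intro i hi
      rcases Nat.eq_or_lt_of_le hi with rfl | h
      · rfl
      · have hi' : i ≤ k := Nat.lt_succ_iff.mp h
        exact (step k i hi').trans (ih i hi')
  have chainle : ∀ j k, k ≤ j → S.le (f j) (f k) := by
    intro j
    induction j with
    | zero => intro k hk; cases Nat.le_zero.mp hk; exact S.le_refl _
    | succ j ih =>
      intro k hk
      rcases Nat.eq_or_lt_of_le hk with rfl | h
      · exact S.le_refl _
      · exact S.le_trans _ _ _ (hle j) (ih k (Nat.lt_succ_iff.mp h))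
  obtain ⟨B, hB⟩ := hMC (fun n => S.r n (f n)) fun n => ⟨f n, fun i hi => agree n i hi⟩
  refine ⟨B, ?_, hB, agree⟩
  intro k
  rw [h4i]
  intro n
  obtain ⟨m, hm⟩ := (h4i (f (max n k)) (f k)).mp (chainle _ _ (le_max_right n k)) n
  refine ⟨m, ?_⟩
  rw [hB n, ← agree (max n k) n (le_max_left n k)]
  exact hm

end RSpace
/-- Abstract version of Galvin's lemma. -/
theorem abstract_galvin (S : RSpace) (hS : S.Axioms) (F : Set S.AR) (A : S.R) :
    ∃ B : S.R, S.le B A ∧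
      ((∀ a ∈ S.ARof B, a ∉ F) ∨ (∀ C : S.R, S.le C B → ∃ n, S.r n C ∈ F)) := by
  classical
  obtain ⟨hA1, hA2, hA3, hA4i, hA4ii, hA5, hA6, hMC⟩ := hS
  -- Fusion 1: obtain `Bs ≤ A` deciding every `a ∈ AR(Bs)`.
  have step1 : ∀ k C, ∃ D, S.le D C ∧ S.r k D = S.r k C ∧
      ∀ a, S.IsDepth C a k → (S.acc F D a ∨ S.rej F D a) := by
    intro k C
    obtain ⟨D, h1, h2, h3⟩ := S.inner k C (fun a D => S.acc F D a ∨ S.rej F D a)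
      (fun a D D' hle h => h.elim (fun h => Or.inl (S.acc_mono F hle h))
        (fun h => Or.inr (S.rej_mono F hle h)))
      {a | S.IsDepth C a k}
      ((hA4ii (S.r k C)).subset fun a ha => ha.1)
      (by
        intro a ha D hDC hDr
        have hd : S.IsDepth D a k := by
          constructor
          · rw [hDr]; exact ha.1
          · intro i hi; rw [(hA3 D C k k hDr).2 i hi]; exact ha.2 i hi
        obtain ⟨D', hD', hdec⟩ := S.decide_at_depth F hA5 a D k hd
        obtain ⟨hle', hr'⟩ := S.nbhd_r hA3 hD'
        exact ⟨D', hle', hr', hdec⟩)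
    exact ⟨D, h1, h2, fun a ha => h3 a ha⟩
  obtain ⟨f, hf0, hf⟩ := S.chain A _ step1
  obtain ⟨Bs, hBsle, hBsr, agree1⟩ := S.fusion_limit hA3 hA4i hMC f
    (fun k => (hf k).1) (fun k => (hf k).2.1)
  have hBsA : S.le Bs A := hf0 ▸ hBsle 0
  have hdec : ∀ b ∈ S.ARof Bs, S.acc F Bs b ∨ S.rej F Bs b := by
    rintro a ⟨C, hCB, l, hl⟩
    obtain ⟨m0, hm0⟩ := (hA4i C Bs).mp hCB l
    rw [hl] at hm0
    obtain ⟨m, hm⟩ := S.exists_isDepth ⟨m0, hm0⟩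
    have hm' : S.IsDepth (f m) a m :=
      S.isDepth_congr (fun i hi => (hBsr i).trans (agree1 m i hi).symm) hm
    rcases (hf m).2.2 a hm' with h | h
    · exact Or.inl (S.acc_mono F (hBsle (m + 1)) h)
    · exact Or.inr (S.rej_mono F (hBsle (m + 1)) h)
  have h0mem : S.r 0 Bs ∈ S.ARof Bs := ⟨Bs, S.le_refl _, 0, rfl⟩
  rcases hdec _ h0mem with hacc0 | hrej0
  · -- accepting case: every `C ≤ Bs` has an approximation in `F`.
    exact ⟨Bs, hBsA, Or.inr fun C hC => hacc0 C ⟨hC, 0, hA1 C Bs⟩⟩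
  · -- rejecting case: Fusion 2 inside `Bs`.
    have step2 : ∀ k C, ∃ D, S.le D C ∧ S.r k D = S.r k C ∧
        (S.le C Bs → ∀ a, S.IsDepth C a k → (S.nbhd a C).Nonempty → S.rej F Bs a →
          ∀ C' ∈ S.nbhd a D, ∀ l, S.r l C' = a → S.rej F Bs (S.r (l + 1) C')) := by
      intro k C
      by_cases hCB : S.le C Bs
      · obtain ⟨D, h1, h2, h3⟩ := S.inner k C
          (fun a D => ∀ C' ∈ S.nbhd a D, ∀ l, S.r l C' = a → S.rej F Bs (S.r (l + 1) C'))
          (fun a D D' hle h => fun C' hC' => h C' (S.nbhd_mono hle hC'))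
          {a | S.IsDepth C a k ∧ (S.nbhd a C).Nonempty ∧ S.rej F Bs a}
          ((hA4ii (S.r k C)).subset fun a ha => ha.1.1)
          (by
            rintro a ⟨hd, hne, hr⟩ D hDC hDr
            have hdD : S.IsDepth D a k := by
              constructor
              · rw [hDr]; exact hd.1
              · intro i hi; rw [(hA3 D C k k hDr).2 i hi]; exact hd.2 i hi
            have hneD : (S.nbhd a D).Nonempty := (hA5 a C k hd).1 D ⟨hDC, k, hDr⟩
            obtain ⟨D', hD', hQ⟩ := S.reject_step F hA3 hA5 hA6 Bs hdec a D k
              (S.le_trans _ _ _ hDC hCB) hdD hneD hr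
            obtain ⟨hle', hr'⟩ := S.nbhd_r hA3 hD'
            exact ⟨D', hle', hr', hQ⟩)
        exact ⟨D, h1, h2, fun _ a hd hne hr => h3 a ⟨hd, hne, hr⟩⟩
      · exact ⟨C, S.le_refl _, rfl, fun h => absurd h hCB⟩
    obtain ⟨g, hg0, hg⟩ := S.chain Bs _ step2
    obtain ⟨Cs, hCsle, hCsr, agree2⟩ := S.fusion_limit hA3 hA4i hMC g
      (fun k => (hg k).1) (fun k => (hg k).2.1)
    have hgB : ∀ k, S.le (g k) Bs := by
      intro k
      induction k with
      | zero => exact hg0 ▸ S.le_refl Bs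
      | succ k ih => exact S.le_trans _ _ _ (hg k).1 ih
    have hCsBs : S.le Cs Bs := S.le_trans _ _ _ (hCsle 0) (hgB 0)
    have hrejAll : ∀ l C, S.le C Cs → S.rej F Bs (S.r l C) := by
      intro l
      induction l with
      | zero => intro C hC; rw [hA1 C Bs]; exact hrej0
      | succ l ih =>
        intro C hC
        have hr' : S.rej F Bs (S.r l C) := ih C hC
        obtain ⟨m0, hm0⟩ := (hA4i C Cs).mp hC l
        obtain ⟨m, hm⟩ := S.exists_isDepth ⟨m0, hm0⟩
        have hm' : S.IsDepth (g m) (S.r l C) m :=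
          S.isDepth_congr (fun i hi => (hCsr i).trans (agree2 m i hi).symm) hm
        have hCm : S.le C (g m) := S.le_trans _ _ _ hC (hCsle m)
        have hCm1 : S.le C (g (m + 1)) := S.le_trans _ _ _ hC (hCsle (m + 1))
        exact (hg m).2.2 (hgB m) (S.r l C) hm' ⟨C, hCm, l, rfl⟩ hr' C ⟨hCm1, l, rfl⟩ l rfl
    refine ⟨Cs, S.le_trans _ _ _ hCsBs hBsA, Or.inl ?_⟩
    rintro a ⟨C, hCle, l, hl⟩ haF
    have hrej := hrejAll l C hCle
    rw [hl] at hrej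
    refine hrej Cs hCsBs ⟨C, hCle, l, hl⟩ ?_
    rintro C' ⟨-, l', hl'⟩
    exact ⟨l', hl'.symm ▸ haF⟩
end

section
/- Let (R, ≤, r) be metrically closed and satisfy axioms A.1–A.6 of topological Ramsey space theory. Then for all k, s ∈ ℕ, every A ∈ R, and every coloring c : AR_k → s, there exists B ≤ A such that c is constant on AR_k(B), the set of k-th approximations of elements C ≤ B. -/
namespace RSpace

variable {S : RSpace}

/-- `b` is a level-`m` extension of `a` inside `B`. -/
def Ext (S : RSpace) (a : S.AR) (B : S.R) (m : ℕ) (b : S.AR) : Prop :=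
  ∃ C ∈ S.nbhd a B, S.r m C = b

theorem mem_nbhd_self (S : RSpace) (j : ℕ) (B : S.R) : B ∈ S.nbhd (S.r j B) B :=
  ⟨S.le_refl B, j, rfl⟩

theorem nbhd_eq_of_mem (h3 : S.A3) {B₀ B : S.R} {j : ℕ}
    (h : B ∈ S.nbhd (S.r j B₀) B₀) : ∀ i ≤ j, S.r i B = S.r i B₀ := by
  obtain ⟨hle, n, hn⟩ := h
  obtain ⟨rfl, hlt⟩ := h3 B B₀ n j hn
  intro i hi
  rcases eq_or_lt_of_le hi with rfl | hi
  · exact hn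
  · exact hlt i hi

theorem nbhd_mem_trans (h3 : S.A3) {B₀ B₁ B₂ : S.R} {j : ℕ}
    (h1 : B₁ ∈ S.nbhd (S.r j B₀) B₀) (h2 : B₂ ∈ S.nbhd (S.r j B₁) B₁) :
    B₂ ∈ S.nbhd (S.r j B₀) B₀ := by
  refine ⟨S.le_trans _ _ _ h2.1 h1.1, ?_⟩
  obtain ⟨n, hn⟩ := h2.2
  exact ⟨n, hn.trans (S.nbhd_eq_of_mem h3 h1 j le_rfl)⟩

theorem isDepth_of_mem (h3 : S.A3) {B₀ B : S.R} {a : S.AR} {j : ℕ}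
    (h : B ∈ S.nbhd (S.r j B₀) B₀) (hd : S.IsDepth B₀ a j) : S.IsDepth B a j := by
  constructor
  · rw [S.nbhd_eq_of_mem h3 h j le_rfl]; exact hd.1
  · intro i hi
    rw [S.nbhd_eq_of_mem h3 h i hi.le]; exact hd.2 i hi

theorem nbhd_subset {B B' : S.R} {a : S.AR} (h : S.le B B') :
    S.nbhd a B ⊆ S.nbhd a B' := fun C hC => ⟨S.le_trans _ _ _ hC.1 h, hC.2⟩

theorem ext_mono {B B' : S.R} {a b : S.AR} {m : ℕ} (h : S.le B B')
    (hb : S.Ext a B m b) : S.Ext a B' m b := by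
  obtain ⟨C, hC, hrC⟩ := hb
  exact ⟨C, S.nbhd_subset h hC, hrC⟩

/-- Homogenize the one-step extensions of a single `a`, using A.6 once per color. -/
theorem homog (h3 : S.A3) (h6 : S.A6) {s : ℕ} (c : S.AR → Fin s) (k j : ℕ)
    (a : S.AR) (B₀ : S.R) :
    ∃ B ∈ S.nbhd (S.r j B₀) B₀,
      S.IsDepth B₀ a j → (∃ C, S.r k C = a) →
      ∀ b₁ b₂, S.Ext a B (k + 1) b₁ → S.Ext a B (k + 1) b₂ → c b₁ = c b₂ := by
  by_cases hd : S.IsDepth B₀ a j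
  · by_cases hk : ∃ C, S.r k C = a
    · have main : ∀ m : ℕ, ∃ B ∈ S.nbhd (S.r j B₀) B₀,
          (∀ b, S.Ext a B (k + 1) b → m ≤ (c b).val) ∨
          (∀ b₁ b₂, S.Ext a B (k + 1) b₁ → S.Ext a B (k + 1) b₂ → c b₁ = c b₂) := by
        intro m
        induction m with
        | zero => exact ⟨B₀, S.mem_nbhd_self j B₀, Or.inl fun b _ => Nat.zero_le _⟩
        | succ m ih =>
          obtain ⟨B, hB, hcase⟩ := ih
          rcases hcase with hlo | hconst
          · obtain ⟨B', hB', hcase'⟩ :=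
              h6 a B j k (S.isDepth_of_mem h3 hB hd) hk {b | (c b).val = m}
            refine ⟨B', S.nbhd_mem_trans h3 hB hB', ?_⟩
            rcases hcase' with hin | hout
            · right
              intro b₁ b₂ hb₁ hb₂
              have e1 : (c b₁).val = m := hin b₁ hb₁
              have e2 : (c b₂).val = m := hin b₂ hb₂
              exact Fin.ext (e1.trans e2.symm)
            · left
              intro b hb
              have hbB : S.Ext a B (k + 1) b := S.ext_mono hB'.1 hb
              have h1 := hlo b hbB
              have h2 : ¬ (c b).val = m := hout b hb
              omega
          · exact ⟨B, hB, Or.inr hconst⟩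
      obtain ⟨B, hB, hcase⟩ := main s
      refine ⟨B, hB, fun _ _ b₁ b₂ hb₁ hb₂ => ?_⟩
      rcases hcase with hlo | hconst
      · exact absurd (hlo b₁ hb₁) (Nat.not_le.mpr (c b₁).isLt)
      · exact hconst b₁ b₂ hb₁ hb₂
    · exact ⟨B₀, S.mem_nbhd_self j B₀, fun _ h => absurd h hk⟩
  · exact ⟨B₀, S.mem_nbhd_self j B₀, fun h => absurd h hd⟩

/-- Homogenize the extensions of a finite set of `a`'s simultaneously. -/
theorem amalg (h3 : S.A3) (h6 : S.A6) {s : ℕ} (c : S.AR → Fin s) (k j : ℕ)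
    (F : Finset S.AR) (B₀ : S.R) :
    ∃ B ∈ S.nbhd (S.r j B₀) B₀, ∀ a ∈ F,
      S.IsDepth B₀ a j → (∃ C, S.r k C = a) →
      ∀ b₁ b₂, S.Ext a B (k + 1) b₁ → S.Ext a B (k + 1) b₂ → c b₁ = c b₂ := by
  classical
  induction F using Finset.induction_on generalizing B₀ with
  | empty =>
    exact ⟨B₀, S.mem_nbhd_self j B₀, fun a ha => absurd ha (Finset.notMem_empty a)⟩
  | insert _ _ ha ih =>
    rename_i a F
    obtain ⟨B₁, hB₁, hhom⟩ := S.homog h3 h6 c k j a B₀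
    obtain ⟨B, hB, hF⟩ := ih B₁
    refine ⟨B, S.nbhd_mem_trans h3 hB₁ hB, ?_⟩
    intro a' ha' hd hk b₁ b₂ hb₁ hb₂
    rcases Finset.mem_insert.mp ha' with rfl | ha'F
    · exact hhom hd hk b₁ b₂ (S.ext_mono hB.1 hb₁) (S.ext_mono hB.1 hb₂)
    · exact hF a' ha'F (S.isDepth_of_mem h3 hB₁ hd) hk b₁ b₂ hb₁ hb₂

/-- One step of the fusion sequence. -/
noncomputable def fuseNext (S : RSpace) (h3 : S.A3) (h4ii : S.A4ii) (h6 : S.A6)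
    {s : ℕ} (c : S.AR → Fin s) (k : ℕ) (n : ℕ) (B : S.R) : S.R :=
  (S.amalg h3 h6 c k n ((h4ii (S.r n B)).toFinset) B).choose

theorem fuseNext_spec (S : RSpace) (h3 : S.A3) (h4ii : S.A4ii) (h6 : S.A6)
    {s : ℕ} (c : S.AR → Fin s) (k : ℕ) (n : ℕ) (B : S.R) :
    S.fuseNext h3 h4ii h6 c k n B ∈ S.nbhd (S.r n B) B ∧
    ∀ a ∈ (h4ii (S.r n B)).toFinset,
      S.IsDepth B a n → (∃ C, S.r k C = a) →
      ∀ b₁ b₂, S.Ext a (S.fuseNext h3 h4ii h6 c k n B) (k + 1) b₁ →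
        S.Ext a (S.fuseNext h3 h4ii h6 c k n B) (k + 1) b₂ → c b₁ = c b₂ :=
  (S.amalg h3 h6 c k n ((h4ii (S.r n B)).toFinset) B).choose_spec

/-- The fusion sequence. -/
noncomputable def fuse (S : RSpace) (h3 : S.A3) (h4ii : S.A4ii) (h6 : S.A6)
    {s : ℕ} (c : S.AR → Fin s) (k : ℕ) (A : S.R) : ℕ → S.R
  | 0 => A
  | n + 1 => S.fuseNext h3 h4ii h6 c k n (S.fuse h3 h4ii h6 c k A n)

end RSpace

/-- Abstract version of Ramsey's theorem: every finite coloring of `AR_k` is constant on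
`AR_k(B) = {r_k(C) : C ≤ B}` for some `B ≤ A`. -/
theorem abstract_ramsey (S : RSpace) (hS : S.Axioms) (k s : ℕ) (A : S.R)
    (c : S.AR → Fin s) :
    ∃ B : S.R, S.le B A ∧
      ∀ a₁ a₂ : S.AR, (∃ C, S.le C B ∧ S.r k C = a₁) → (∃ C, S.le C B ∧ S.r k C = a₂) →
        c a₁ = c a₂ := by
  obtain ⟨h1, _h2, h3, h4i, h4ii, _h5, h6, hmc⟩ := hS
  induction k generalizing A c with
  | zero =>
    refine ⟨A, S.le_refl A, ?_⟩
    rintro a₁ a₂ ⟨C₁, _, rfl⟩ ⟨C₂, _, rfl⟩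
    rw [h1 C₁ C₂]
  | succ k ih =>
    classical
    set seq : ℕ → S.R := S.fuse h3 h4ii h6 c k A with hseq
    have hspec : ∀ n, seq (n + 1) ∈ S.nbhd (S.r n (seq n)) (seq n) ∧
        ∀ a ∈ (h4ii (S.r n (seq n))).toFinset, S.IsDepth (seq n) a n →
          (∃ C, S.r k C = a) → ∀ b₁ b₂, S.Ext a (seq (n + 1)) (k + 1) b₁ →
          S.Ext a (seq (n + 1)) (k + 1) b₂ → c b₁ = c b₂ :=
      fun n => S.fuseNext_spec h3 h4ii h6 c k n (seq n)
    have agr : ∀ n, ∀ i ≤ n, S.r i (seq (n + 1)) = S.r i (seq n) :=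
      fun n => S.nbhd_eq_of_mem h3 (hspec n).1
    set f : ℕ → S.AR := fun n => S.r n (seq (n + 1)) with hf
    have frz : ∀ n, ∀ i ≤ n, S.r i (seq (n + 1)) = f i := by
      intro n
      induction n with
      | zero =>
        intro i hi
        obtain rfl : i = 0 := Nat.le_zero.mp hi
        rfl
      | succ n ihn =>
        intro i hi
        rcases eq_or_lt_of_le hi with rfl | hlt
        · rfl
        · exact (agr (n + 1) i hlt.le).trans
            (ihn i (Nat.lt_succ_iff.mp hlt))
    obtain ⟨D, hD⟩ := hmc f (fun n => ⟨seq (n + 1), fun i hi => frz n i hi⟩)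
    have frzD : ∀ N, ∀ i ≤ N, S.r i (seq N) = S.r i D := by
      intro N i hi
      rw [hD i]
      rcases eq_or_lt_of_le hi with rfl | hlt
      · exact (agr i i le_rfl).symm
      · obtain ⟨M, rfl⟩ : ∃ M, N = M + 1 := ⟨N - 1, by omega⟩
        exact frz M i (by omega)
    have chain : ∀ n m, n ≤ m → S.le (seq m) (seq n) := by
      intro n m h
      induction m with
      | zero =>
        obtain rfl : n = 0 := Nat.le_zero.mp h
        exact S.le_refl _
      | succ m ihm =>
        rcases eq_or_lt_of_le h with rfl | hlt
        · exact S.le_refl _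
        · exact S.le_trans _ _ _ (hspec m).1.1 (ihm (Nat.lt_succ_iff.mp hlt))
    have hDle : ∀ n, S.le D (seq n) := by
      intro n
      refine (h4i D (seq n)).mpr fun m => ?_
      have h1 : S.r m (seq (max n (m + 1))) = S.r m D := frzD _ m (by omega)
      have h2 := (h4i (seq (max n (m + 1))) (seq n)).mp
        (chain n _ (le_max_left _ _)) m
      rwa [h1] at h2
    have hom : ∀ a, (∃ C, S.le C D ∧ S.r k C = a) →
        ∀ b₁ b₂, S.Ext a D (k + 1) b₁ → S.Ext a D (k + 1) b₂ → c b₁ = c b₂ := by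
      rintro a ⟨C, hCD, rfl⟩ b₁ b₂ hb₁ hb₂
      have hex : ∃ j, S.lefin (S.r k C) (S.r j D) := (h4i C D).mp hCD k
      have hdj : S.IsDepth (seq (Nat.find hex)) (S.r k C) (Nat.find hex) := by
        constructor
        · rw [frzD _ _ le_rfl]; exact Nat.find_spec hex
        · intro i hi
          rw [frzD _ i hi.le]; exact Nat.find_min hex hi
      have hmem : S.r k C ∈ (h4ii (S.r (Nat.find hex) (seq (Nat.find hex)))).toFinset := by
        rw [Set.Finite.mem_toFinset]; exact hdj.1
      exact (hspec (Nat.find hex)).2 (S.r k C) hmem hdj ⟨C, rfl⟩ b₁ b₂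
        (S.ext_mono (hDle (Nat.find hex + 1)) hb₁)
        (S.ext_mono (hDle (Nat.find hex + 1)) hb₂)
    set c' : S.AR → Fin s := fun a =>
      if h : (S.nbhd a D).Nonempty then c (S.r (k + 1) h.some)
      else c (S.r (k + 1) D) with hc'
    obtain ⟨B, hBD, hconst⟩ := ih D c'
    refine ⟨B, S.le_trans B D A hBD (hDle 0), ?_⟩
    have key : ∀ C : S.R, S.le C B → c (S.r (k + 1) C) = c' (S.r k C) := by
      intro C hC
      have hCD : S.le C D := S.le_trans C B D hC hBD
      have hmem : C ∈ S.nbhd (S.r k C) D := ⟨hCD, k, rfl⟩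
      have hne : (S.nbhd (S.r k C) D).Nonempty := ⟨C, hmem⟩
      have hval : c' (S.r k C) = c (S.r (k + 1) hne.some) := by
        rw [hc']; exact dif_pos hne
      have hcol : c (S.r (k + 1) C) = c (S.r (k + 1) hne.some) :=
        hom (S.r k C) ⟨C, hCD, rfl⟩ _ _ ⟨C, hmem, rfl⟩ ⟨hne.some, hne.some_mem, rfl⟩
      exact hcol.trans hval.symm
    rintro a₁ a₂ ⟨C₁, hC₁, rfl⟩ ⟨C₂, hC₂, rfl⟩
    exact (key C₁ hC₁).trans
      ((hconst (S.r k C₁) (S.r k C₂) ⟨C₁, hC₁, rfl⟩ ⟨C₂, hC₂, rfl⟩).trans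
        (key C₂ hC₂).symm)
end

section
/- Let (R, ≤, r) be metrically closed and satisfy axioms A.1–A.6 of topological Ramsey space theory. Then for all k, n, s ∈ ℕ and A ∈ R, there exists m ∈ ℕ such that for every coloring c : AR_k^m(A) → s there exists b ∈ AR_n^m(A) such that c is constant on AR_k^m(A, b) = {a ∈ AR_k^m(A) : a ≤_fin b}. -/
namespace RSpace

variable {S : RSpace}

/-- `a ∈ AR_k(B)`: `a` is the `k`-th approximation of some element below `B`. -/
def ARk (S : RSpace) (k : ℕ) (B : S.R) (a : S.AR) : Prop :=
  ∃ C, S.le C B ∧ S.r k C = a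

lemma ARk.mono {k : ℕ} {B B' : S.R} {a : S.AR} (h : S.le B B')
    (ha : S.ARk k B a) : S.ARk k B' a := by
  obtain ⟨C, hC, hr⟩ := ha
  exact ⟨C, S.le_trans _ _ _ hC h, hr⟩

lemma isDepth_transfer {X Y : S.R} {a : S.AR} {d : ℕ}
    (h : ∀ j ≤ d, S.r j X = S.r j Y) (hd : S.IsDepth X a d) : S.IsDepth Y a d := by
  refine ⟨by rw [← h d le_rfl]; exact hd.1, fun i hi hcon => hd.2 i hi ?_⟩
  rwa [h i hi.le]

/-- Homogeneity of one-step extensions of `a` inside `E` with respect to `O`. -/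
def Homog (S : RSpace) (k : ℕ) (a : S.AR) (E : S.R) (O : Set S.AR) : Prop :=
  (∀ b : S.AR, (∃ C ∈ S.nbhd a E, S.r (k + 1) C = b) → b ∈ O) ∨
  (∀ b : S.AR, (∃ C ∈ S.nbhd a E, S.r (k + 1) C = b) → b ∉ O)

lemma Homog.mono {k : ℕ} {a : S.AR} {E E' : S.R} {O : Set S.AR}
    (hle : S.le E' E) (h : S.Homog k a E O) : S.Homog k a E' O := by
  have sub : ∀ b : S.AR, (∃ C ∈ S.nbhd a E', S.r (k + 1) C = b) →
      (∃ C ∈ S.nbhd a E, S.r (k + 1) C = b) := by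
    rintro b ⟨C, ⟨hCE, hj⟩, hr⟩
    exact ⟨C, ⟨S.le_trans _ _ _ hCE hle, hj⟩, hr⟩
  rcases h with h | h
  · exact Or.inl fun b hb => h b (sub b hb)
  · exact Or.inr fun b hb => h b (sub b hb)

lemma stage_aux (hS : S.Axioms) (k i : ℕ) (O : Set S.AR) (B : S.R) :
    ∀ l : List S.AR, ∀ E : S.R, S.le E B → S.r i E = S.r i B →
    ∃ E', S.le E' E ∧ S.r i E' = S.r i B ∧
      ∀ a ∈ l, S.IsDepth B a i → (∃ C₀, S.r k C₀ = a) → S.Homog k a E' O := by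
  obtain ⟨hA1, hA2, hA3, hA4i, hA4ii, hA5, hA6, hMC⟩ := hS
  intro l
  induction l with
  | nil => exact fun E _ hr => ⟨E, S.le_refl E, hr, by simp⟩
  | cons a l ih =>
    intro E hE hr
    obtain ⟨E₁, hE₁le, hE₁r, hE₁⟩ := ih E hE hr
    by_cases ha : S.IsDepth B a i ∧ ∃ C₀, S.r k C₀ = a
    · have htrans : ∀ j ≤ i, S.r j B = S.r j E₁ := by
        intro j hj
        rcases lt_or_eq_of_le hj with hj | rfl
        · exact ((hA3 E₁ B i i hE₁r).2 j hj).symm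
        · exact hE₁r.symm
      have hdep : S.IsDepth E₁ a i := isDepth_transfer htrans ha.1
      obtain ⟨B'', ⟨hB''le, j, hj⟩, hdisj⟩ := hA6 a E₁ i k hdep ha.2 O
      have hji : j = i := (hA3 B'' E₁ j i hj).1
      subst hji
      have hrB'' : S.r j B'' = S.r j B := hj.trans hE₁r
      refine ⟨B'', S.le_trans _ _ _ hB''le hE₁le, hrB'', ?_⟩
      intro a' ha' hd hc
      rcases List.mem_cons.mp ha' with rfl | hmem
      · exact hdisj
      · exact (hE₁ a' hmem hd hc).mono hB''le
    · refine ⟨E₁, hE₁le, hE₁r, ?_⟩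
      intro a' ha' hd hc
      rcases List.mem_cons.mp ha' with rfl | hmem
      · exact absurd ⟨hd, hc⟩ ha
      · exact hE₁ a' hmem hd hc

lemma stage (hS : S.Axioms) (k i : ℕ) (O : Set S.AR) (B : S.R) :
    ∃ B', S.le B' B ∧ S.r i B' = S.r i B ∧
      ∀ a, S.IsDepth B a i → (∃ C₀, S.r k C₀ = a) → S.Homog k a B' O := by
  have hfin : {b | S.lefin b (S.r i B)}.Finite := hS.2.2.2.2.1 (S.r i B)
  obtain ⟨E', h1, h2, h3⟩ :=
    stage_aux hS k i O B hfin.toFinset.toList B (S.le_refl B) rfl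
  refine ⟨E', h1, h2, fun a hd hc => h3 a ?_ hd hc⟩
  rw [Finset.mem_toList, Set.Finite.mem_toFinset]
  exact hd.1

lemma fusion (hS : S.Axioms) (k : ℕ) (O : Set S.AR) (A : S.R) :
    ∃ (Bt : S.R) (Bs : ℕ → S.R), S.le Bt A ∧ (∀ d, S.le Bt (Bs d)) ∧
      (∀ d j, j ≤ d → S.r j Bt = S.r j (Bs d)) ∧
      ∀ d a, S.IsDepth (Bs d) a d → (∃ C₀, S.r k C₀ = a) →
        S.Homog k a (Bs (d + 1)) O := by
  have hA3 := hS.2.2.1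
  have hA4i := hS.2.2.2.1
  have hMC := hS.2.2.2.2.2.2.2
  let Bs : ℕ → S.R := fun d => Nat.rec A (fun i Bi => (stage hS k i O Bi).choose) d
  have hsucc : ∀ i, S.le (Bs (i + 1)) (Bs i) ∧ S.r i (Bs (i + 1)) = S.r i (Bs i) ∧
      ∀ a, S.IsDepth (Bs i) a i → (∃ C₀, S.r k C₀ = a) → S.Homog k a (Bs (i + 1)) O :=
    fun i => (stage hS k i O (Bs i)).choose_spec
  have stab : ∀ d j, j ≤ d → S.r j (Bs d) = S.r j (Bs j) := by
    intro d
    induction d with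
    | zero => intro j hj; rw [Nat.le_zero.mp hj]
    | succ d ihd =>
      intro j hj
      rcases Nat.lt_or_ge j (d + 1) with hj' | hj'
      · have hj'' : j ≤ d := Nat.lt_succ_iff.mp hj'
        have h1 : S.r j (Bs (d + 1)) = S.r j (Bs d) := by
          rcases lt_or_eq_of_le hj'' with h | rfl
          · exact (hA3 (Bs (d + 1)) (Bs d) d d (hsucc d).2.1).2 j h
          · exact (hsucc j).2.1
        rw [h1, ihd j hj'']
      · have : j = d + 1 := le_antisymm hj hj'
        rw [this]
  have lechain : ∀ d d', d ≤ d' → S.le (Bs d') (Bs d) := by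
    intro d d' h
    induction d' with
    | zero => rw [Nat.le_zero.mp h]; exact S.le_refl _
    | succ d' ihd =>
      rcases Nat.lt_or_ge d (d' + 1) with h' | h'
      · exact S.le_trans _ _ _ (hsucc d').1 (ihd (Nat.lt_succ_iff.mp h'))
      · have : d = d' + 1 := le_antisymm h h'
        rw [this]; exact S.le_refl _
  obtain ⟨Bt, hBt⟩ := hMC (fun j => S.r j (Bs j)) (fun n => ⟨Bs n, fun i hi => stab n i hi⟩)
  have hBtBs : ∀ d, S.le Bt (Bs d) := by
    intro d
    rw [hA4i]
    intro nn
    rcases le_or_gt nn d with h | h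
    · refine ⟨nn, ?_⟩
      rw [hBt nn, ← stab d nn h]
      exact S.lefin_refl _
    · obtain ⟨m, hm⟩ := (hA4i (Bs nn) (Bs d)).mp (lechain d nn h.le) nn
      exact ⟨m, by rw [hBt nn]; exact hm⟩
  refine ⟨Bt, Bs, hBtBs 0, hBtBs, ?_, fun d a hd hc => (hsucc d).2.2 a hd hc⟩
  intro d j hj
  rw [hBt j, stab d j hj]

lemma ramsey_O (hS : S.Axioms) : ∀ (k : ℕ) (O : Set S.AR) (A : S.R),
    ∃ B, S.le B A ∧
      ((∀ a, S.ARk k B a → a ∈ O) ∨ (∀ a, S.ARk k B a → a ∉ O)) := by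
  classical
  intro k
  induction k with
  | zero =>
    intro O A
    refine ⟨A, S.le_refl A, ?_⟩
    by_cases h : S.r 0 A ∈ O
    · left; rintro a ⟨C, _, rfl⟩; rwa [hS.1 C A]
    · right; rintro a ⟨C, _, rfl⟩; rwa [hS.1 C A]
  | succ k ih =>
    intro O A
    have hA4i := hS.2.2.2.1
    obtain ⟨Bt, Bs, hBtA, hBtBs, hstab, hhom⟩ := fusion hS k O A
    set O' : Set S.AR := {a | ∃ d, S.IsDepth Bt a d ∧
      ∀ b : S.AR, (∃ C ∈ S.nbhd a (Bs (d + 1)), S.r (k + 1) C = b) → b ∈ O} with hO'def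
    obtain ⟨Bst, hBst, hcase⟩ := ih O' Bt
    refine ⟨Bst, S.le_trans _ _ _ hBst hBtA, ?_⟩
    rcases hcase with hin | hout
    · left
      rintro b ⟨C, hC, rfl⟩
      obtain ⟨d, _, hall⟩ := hin (S.r k C) ⟨C, hC, rfl⟩
      refine hall _ ⟨C, ⟨?_, ⟨k, rfl⟩⟩, rfl⟩
      exact S.le_trans _ _ _ hC (S.le_trans _ _ _ hBst (hBtBs (d + 1)))
    · right
      rintro b ⟨C, hC, rfl⟩
      have hCBt : S.le C Bt := S.le_trans _ _ _ hC hBst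
      have hex : ∃ dd, S.lefin (S.r k C) (S.r dd Bt) := (hA4i C Bt).mp hCBt k
      have hdBt : S.IsDepth Bt (S.r k C) (Nat.find hex) :=
        ⟨Nat.find_spec hex, fun i hi => Nat.find_min hex hi⟩
      have hdBsd : S.IsDepth (Bs (Nat.find hex)) (S.r k C) (Nat.find hex) :=
        isDepth_transfer (fun j hj => hstab (Nat.find hex) j hj) hdBt
      rcases hhom (Nat.find hex) (S.r k C) hdBsd ⟨C, rfl⟩ with hl | hr
      · exact absurd ⟨Nat.find hex, hdBt, hl⟩ (hout (S.r k C) ⟨C, hC, rfl⟩)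
      · refine hr _ ⟨C, ⟨?_, ⟨k, rfl⟩⟩, rfl⟩
        exact S.le_trans _ _ _ hC (S.le_trans _ _ _ hBst (hBtBs _))

lemma ramsey_fin (hS : S.Axioms) (k : ℕ) :
    ∀ (s : ℕ) (c : S.AR → Fin s) (A : S.R), ∃ B, S.le B A ∧
      ∀ a₁ a₂, S.ARk k B a₁ → S.ARk k B a₂ → c a₁ = c a₂ := by
  intro s
  induction s with
  | zero => exact fun c A => ⟨A, S.le_refl A, fun a₁ _ _ _ => (c a₁).elim0⟩
  | succ s ih =>
    intro c A
    obtain ⟨B₁, hB₁, hcase⟩ := ramsey_O hS k {a | c a = Fin.last s} A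
    rcases hcase with h | h
    · exact ⟨B₁, hB₁, fun a₁ a₂ h₁ h₂ => (h a₁ h₁).trans (h a₂ h₂).symm⟩
    · cases s with
      | zero =>
        refine ⟨B₁, hB₁, fun a₁ a₂ _ _ => ?_⟩
        have h1 := (c a₁).isLt
        have h2 := (c a₂).isLt
        apply Fin.ext
        omega
      | succ s' =>
        classical
        set c' : S.AR → Fin (s' + 1) := fun a =>
          if hx : c a = Fin.last (s' + 1) then 0 else (c a).castPred hx with hc'
        obtain ⟨B, hB, hconst⟩ := ih c' B₁
        refine ⟨B, S.le_trans _ _ _ hB hB₁, ?_⟩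
        intro a₁ a₂ h₁ h₂
        have hne₁ : c a₁ ≠ Fin.last (s' + 1) := h a₁ (h₁.mono hB)
        have hne₂ : c a₂ ≠ Fin.last (s' + 1) := h a₂ (h₂.mono hB)
        have e₁ : c a₁ = ((c a₁).castPred hne₁).castSucc := (Fin.castSucc_castPred _ _).symm
        have e₂ : c a₂ = ((c a₂).castPred hne₂).castSucc := (Fin.castSucc_castPred _ _).symm
        rw [e₁, e₂]
        have : c' a₁ = c' a₂ := hconst a₁ a₂ h₁ h₂
        simp only [hc', dif_neg hne₁, dif_neg hne₂] at this
        rw [this]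

end RSpace

/-- Abstract version of the finite Ramsey theorem: for some `m`, every finite coloring of
`AR_k^m(A)` (the `k`-th approximations of elements below `A` of depth `m` in `A`) is
constant on `AR_k^m(A, b) = {a ∈ AR_k^m(A) : a ≤_fin b}` for some `b ∈ AR_n^m(A)`. -/
theorem abstract_finite_ramsey (S : RSpace) (hS : S.Axioms) (k n s : ℕ) (A : S.R) :
    ∃ m : ℕ, ∀ c : S.AR → Fin s,
      ∃ b : S.AR, (∃ C, S.le C A ∧ S.r n C = b) ∧ S.IsDepth A b m ∧
        ∀ a₁ a₂ : S.AR,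
          ((∃ C, S.le C A ∧ S.r k C = a₁) ∧ S.IsDepth A a₁ m ∧ S.lefin a₁ b) →
          ((∃ C, S.le C A ∧ S.r k C = a₂) ∧ S.IsDepth A a₂ m ∧ S.lefin a₂ b) →
          c a₁ = c a₂ := by
  classical
  have hA3 := hS.2.2.1
  have hA4i := hS.2.2.2.1
  have hA5 := hS.2.2.2.2.2.1
  rcases Nat.eq_zero_or_pos s with rfl | hs
  · exact ⟨0, fun c => (c (S.r 0 A)).elim0⟩
  by_contra hcon
  push_neg at hcon
  choose cs hcs using hcon
  set cstar : S.AR → Fin s := fun a =>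
    if h : ∃ d, S.lefin a (S.r d A) then cs (Nat.find h) a else ⟨0, hs⟩ with hcstar
  obtain ⟨B, hBA, hconst⟩ := RSpace.ramsey_fin hS k s cstar A
  have hexb : ∃ d, S.lefin (S.r n B) (S.r d A) := (hA4i B A).mp hBA n
  set m := Nat.find hexb with hm
  have hdep : S.IsDepth A (S.r n B) m :=
    ⟨Nat.find_spec hexb, fun i hi => Nat.find_min hexb hi⟩
  obtain ⟨a₁, a₂, ⟨hm₁, hd₁, hfin₁⟩, ⟨hm₂, hd₂, hfin₂⟩, hne⟩ :=
    hcs m (S.r n B) ⟨B, hBA, rfl⟩ hdep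
  have key : ∀ a, S.IsDepth A a m → cstar a = cs m a := by
    intro a hd
    have hex : ∃ d, S.lefin a (S.r d A) := ⟨m, hd.1⟩
    have hfind : Nat.find hex = m :=
      (Nat.find_eq_iff hex).mpr ⟨hd.1, fun j hj => hd.2 j hj⟩
    rw [hcstar]
    simp only [dif_pos hex, hfind]
  have mem : ∀ a, (∃ C, S.le C A ∧ S.r k C = a) → S.lefin a (S.r n B) →
      S.ARk k B a := by
    rintro a ⟨C, hCA, hrC⟩ hfin
    have hex : ∃ d, S.lefin a (S.r d B) := ⟨n, hfin⟩
    have hd : S.IsDepth B a (Nat.find hex) :=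
      ⟨Nat.find_spec hex, fun i hi => Nat.find_min hex hi⟩
    obtain ⟨D, hDB, j, hrj⟩ :=
      (hA5 a B (Nat.find hex) hd).1 B ⟨S.le_refl B, ⟨Nat.find hex, rfl⟩⟩
    have hjk : j = k := (hA3 D C j k (hrj.trans hrC.symm)).1
    exact ⟨D, hDB, by rw [← hjk]; exact hrj⟩
  refine hne ?_
  rw [← key a₁ hd₁, ← key a₂ hd₂]
  exact hconst a₁ a₂ (mem a₁ hm₁ hfin₁) (mem a₂ hm₂ hfin₂)
end

section
/- Let (R, ≤, r) be metrically closed and satisfy axioms A.1–A.6. Then every metrically open subset X of R is Ramsey: for every nonempty Ellentuck neighborhood [a, A] there exists B ∈ [a, A] such that [a, B] ⊆ X or [a, B] ∩ X = ∅. -/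
/-- `X` is open in the metric topology on `R` (basic open sets `[a] = {B : ∃ n, r_n(B) = a}`). -/
def RSpace.MetricOpen (S : RSpace) (X : Set S.R) : Prop :=
  ∀ A ∈ X, ∃ n, ∀ B : S.R, S.r n B = S.r n A → B ∈ X

section AuxRamsey

variable (S : RSpace)

/-- The family of "good" approximations determined by an open set `X`. -/
def auxFam (X : Set S.R) : Set S.AR := {c | ∀ D : S.R, (∃ n, S.r n D = c) → D ∈ X}

/-- `B` accepts `b`: every member of `[b, B]` has an approximation in the family. -/
def auxAcc (X : Set S.R) (b : S.AR) (B : S.R) : Prop :=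
  ∀ C ∈ S.nbhd b B, ∃ n, S.r n C ∈ auxFam S X

/-- `B` rejects `b`: no member of the depth neighborhood of `b` in `B` accepts `b`. -/
def auxRej (X : Set S.R) (b : S.AR) (B : S.R) : Prop :=
  ∀ n, S.IsDepth B b n → ∀ C ∈ S.nbhd (S.r n B) B, ¬ auxAcc S X b C

variable {S}

lemma aux_approx_agree (h3 : S.A3) {B C : S.R} {m k : ℕ} (h : S.r m C = S.r k B) :
    m = k ∧ ∀ i ≤ k, S.r i C = S.r i B := by
  obtain ⟨rfl, hpref⟩ := h3 C B m k h
  refine ⟨rfl, fun i hi => ?_⟩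
  rcases lt_or_eq_of_le hi with h' | h'
  · exact hpref i h'
  · subst h'; exact h

lemma aux_self_mem (B : S.R) (k : ℕ) : B ∈ S.nbhd (S.r k B) B := ⟨S.le_refl B, k, rfl⟩

lemma aux_nbhd_subset {b : S.AR} {B B' : S.R} (h : S.le B' B) :
    S.nbhd b B' ⊆ S.nbhd b B :=
  fun C hC => ⟨S.le_trans C B' B hC.1 h, hC.2⟩

lemma aux_nbhdN_agree (h3 : S.A3) {B C : S.R} {k : ℕ} (h : C ∈ S.nbhd (S.r k B) B) :
    ∀ i ≤ k, S.r i C = S.r i B := by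
  obtain ⟨_, m, hm⟩ := h
  exact (aux_approx_agree h3 hm).2

lemma aux_nbhdN_trans (h3 : S.A3) {B C C' : S.R} {k : ℕ}
    (h1 : C' ∈ S.nbhd (S.r k B) B) (h2 : C ∈ S.nbhd (S.r k C') C') :
    C ∈ S.nbhd (S.r k B) B := by
  refine ⟨S.le_trans _ _ _ h2.1 h1.1, ?_⟩
  obtain ⟨_, m, hm⟩ := h2
  exact ⟨m, hm.trans (aux_nbhdN_agree h3 h1 k le_rfl)⟩

lemma aux_depth_exists {B : S.R} {b : S.AR} (hp : ∃ p, S.lefin b (S.r p B)) :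
    ∃ d, S.IsDepth B b d := by
  classical
  exact ⟨Nat.find hp, Nat.find_spec hp, fun i hi => Nat.find_min hp hi⟩

lemma aux_depth_unique {B : S.R} {b : S.AR} {n m : ℕ}
    (h1 : S.IsDepth B b n) (h2 : S.IsDepth B b m) : n = m := by
  by_contra h
  rcases Nat.lt_or_ge n m with h' | h'
  · exact h2.2 n h' h1.1
  · exact h1.2 m (lt_of_le_of_ne h' (Ne.symm h)) h2.1

lemma aux_isDepth_congr {B B' : S.R} {b : S.AR} {k : ℕ}
    (h : ∀ i ≤ k, S.r i B' = S.r i B) (hd : S.IsDepth B b k) : S.IsDepth B' b k :=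
  ⟨by rw [h k le_rfl]; exact hd.1, fun i hi => by rw [h i hi.le]; exact hd.2 i hi⟩

lemma aux_acc_anti {X : Set S.R} {b : S.AR} {B B' : S.R} (h : S.le B' B)
    (ha : auxAcc S X b B) : auxAcc S X b B' :=
  fun C hC => ha C (aux_nbhd_subset h hC)

lemma aux_rej_anti (h3 : S.A3) (h4i : S.A4i) (h5 : S.A5) {X : Set S.R} {b : S.AR}
    {B B' : S.R} (hle : S.le B' B) (hR : auxRej S X b B) : auxRej S X b B' := by
  intro n' hd' C'' hC'' hacc
  obtain ⟨w, hwle, mw, hwm⟩ := (h5 b B' n' hd').1 C'' hC''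
  have hwB : S.le w B := S.le_trans _ _ _ (S.le_trans _ _ _ hwle hC''.1) hle
  obtain ⟨q, hq⟩ := (h4i w B).mp hwB mw
  rw [hwm] at hq
  obtain ⟨d, hd⟩ := aux_depth_exists ⟨q, hq⟩
  obtain ⟨A', hA'm, hsub⟩ := (h5 b B d hd).2 w ⟨hwB, mw, hwm⟩
  refine hR d hd A' hA'm (fun C hC => ?_)
  exact hacc C (aux_nbhd_subset hwle (hsub hC))

lemma aux_fam_up (h3 : S.A3) {X : Set S.R} {C : S.R} {n m : ℕ}
    (hF : S.r n C ∈ auxFam S X) (hnm : n ≤ m) : S.r m C ∈ auxFam S X := by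
  rintro D' ⟨q, hq⟩
  obtain ⟨rfl, hpref⟩ := aux_approx_agree h3 hq
  exact hF D' ⟨n, hpref n hnm⟩

/-- The master fusion lemma. -/
lemma aux_master (h2 : S.A2) (h3 : S.A3) (h4i : S.A4i) (h4ii : S.A4ii) (h5 : S.A5)
    (mc : S.MetricallyClosed) (a : S.AR) (l : ℕ) (TOP : S.R)
    (hne0 : ∃ w, w ∈ S.nbhd a TOP)
    (H : ℕ → S.AR → S.R → Prop)
    (Hpers : ∀ k b next next', next' ∈ S.nbhd (S.r k next) next → H k b next → H k b next')
    (PB : ∀ cur, S.le cur TOP → ∀ k b, ∃ next, next ∈ S.nbhd (S.r k cur) cur ∧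
      (next = cur ∨ ∃ b' C m, l ≤ m ∧ S.r m C = b' ∧ S.r l C = a ∧ S.IsDepth next b' k) ∧
      H k b next) :
    ∃ E, S.le E TOP ∧ (∃ w, w ∈ S.nbhd a E) ∧
      ∀ b d, S.IsDepth E b d → ∃ W, S.le E W ∧ (∀ i ≤ d, S.r i W = S.r i E) ∧ H d b W := by
  classical
  have fold : ∀ (k : ℕ) (L : List S.AR) (cur : S.R), S.le cur TOP →
      ∃ next, next ∈ S.nbhd (S.r k cur) cur ∧
        (next = cur ∨ ∃ b' C m, l ≤ m ∧ S.r m C = b' ∧ S.r l C = a ∧ S.IsDepth next b' k) ∧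
        ∀ b ∈ L, H k b next := by
    intro k L
    induction L with
    | nil => exact fun cur _ => ⟨cur, aux_self_mem cur k, Or.inl rfl, by simp⟩
    | cons b L ih =>
      intro cur hcur
      obtain ⟨c1, hm1, hfl1, h1⟩ := PB cur hcur k b
      obtain ⟨next, hm2, hfl2, hall⟩ := ih c1 (S.le_trans _ _ _ hm1.1 hcur)
      refine ⟨next, aux_nbhdN_trans h3 hm1 hm2, ?_, ?_⟩
      · rcases hfl2 with rfl | h'
        · exact hfl1
        · exact Or.inr h'
      · intro b' hb'
        rcases List.mem_cons.mp hb' with rfl | hb'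
        · exact Hpers k b' c1 next hm2 h1
        · exact hall b' hb'
  have hstep : ∀ cur k, ∃ next, next ∈ S.nbhd (S.r k cur) cur ∧
      (next = cur ∨ ∃ b' C m, l ≤ m ∧ S.r m C = b' ∧ S.r l C = a ∧ S.IsDepth next b' k) ∧
      (S.le cur TOP → ∀ b, S.lefin b (S.r k cur) → H k b next) := by
    intro cur k
    by_cases hcur : S.le cur TOP
    · obtain ⟨L, hL⟩ : ∃ L : List S.AR, ∀ b, S.lefin b (S.r k cur) → b ∈ L := by
        have hfin := h4ii (S.r k cur)
        exact ⟨hfin.toFinset.toList, fun b hb => by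
          rw [Finset.mem_toList, Set.Finite.mem_toFinset]; exact hb⟩
      obtain ⟨next, hm, hfl, hall⟩ := fold k L cur hcur
      exact ⟨next, hm, hfl, fun _ b hb => hall b (hL b hb)⟩
    · exact ⟨cur, aux_self_mem cur k, Or.inl rfl, fun h => absurd h hcur⟩
  choose f hf1 hf2 hf3 using hstep
  let seq : ℕ → S.R := fun n => Nat.rec TOP (fun k cur => f cur k) n
  have seqS : ∀ k, seq (k + 1) = f (seq k) k := fun _ => rfl
  have seq0 : seq 0 = TOP := rfl
  have seq_le : ∀ k j, k ≤ j → S.le (seq j) (seq k) := by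
    intro k j hkj
    induction j, hkj using Nat.le_induction with
    | base => exact S.le_refl _
    | succ j hj ih =>
      refine S.le_trans _ _ _ ?_ ih
      rw [seqS]
      exact (hf1 (seq j) j).1
  have seq_top : ∀ k, S.le (seq k) TOP := fun k => seq_le 0 k (Nat.zero_le k)
  have frozen : ∀ i k j, i ≤ k → k ≤ j → S.r i (seq j) = S.r i (seq k) := by
    intro i k j hik hkj
    induction j, hkj using Nat.le_induction with
    | base => rfl
    | succ j hj ih =>
      rw [← ih, seqS]
      exact aux_nbhdN_agree h3 (hf1 (seq j) j) i (le_trans hik hj)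
  obtain ⟨E, hE⟩ := mc (fun n => S.r n (seq n))
    (fun n => ⟨seq n, fun i hi => frozen i i n le_rfl hi⟩)
  have hEseq : ∀ i k, i ≤ k → S.r i E = S.r i (seq k) := by
    intro i k hik
    rw [hE i]
    exact (frozen i i k le_rfl hik).symm
  have hEle : ∀ k, S.le E (seq k) := by
    intro k
    refine (h4i E (seq k)).mpr (fun n => ?_)
    obtain ⟨m, hm⟩ := (h4i (seq (max n k)) (seq k)).mp (seq_le k _ (le_max_right n k)) n
    exact ⟨m, by rw [hEseq n _ (le_max_left n k)]; exact hm⟩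
  refine ⟨E, by rw [← seq0]; exact hEle 0, ?_, ?_⟩
  · by_cases hex : ∃ k b' C m, l ≤ m ∧ S.r m C = b' ∧ S.r l C = a ∧ S.IsDepth (seq (k+1)) b' k
    · obtain ⟨k, b', C, m, hlm, hCb, hCa, hdep⟩ := hex
      have hdE : S.IsDepth E b' k :=
        aux_isDepth_congr (fun i hi => hEseq i (k+1) (le_trans hi (Nat.le_succ k))) hdep
      obtain ⟨w, hwle, mm, hmm⟩ := (h5 b' E k hdE).1 E (aux_self_mem E k)
      obtain ⟨rfl, hpref⟩ := aux_approx_agree h3 (hmm.trans hCb.symm)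
      exact ⟨w, hwle, l, (hpref l hlm).trans hCa⟩
    · have hconst : ∀ k, seq k = TOP := by
        intro k
        induction k with
        | zero => rfl
        | succ k ih =>
          rcases hf2 (seq k) k with he | hP
          · rw [seqS, he, ih]
          · exact absurd ⟨k, hP⟩ hex
      have hET : E = TOP := by
        by_contra hne
        obtain ⟨n, hn⟩ := h2 E TOP hne
        exact hn (by rw [hE n, hconst n])
      rw [hET]; exact hne0
  · intro b d hd
    refine ⟨seq (d+1), hEle (d+1), ?_, ?_⟩
    · intro i hi
      exact (hEseq i (d+1) (le_trans hi (Nat.le_succ d))).symm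
    · rw [seqS]
      refine hf3 (seq d) d (seq_top d) b ?_
      have hb : S.lefin b (S.r d E) := hd.1
      rwa [hEseq d d le_rfl] at hb

end AuxRamsey

/-- Metrically open subsets of a topological Ramsey space are Ramsey. -/
theorem metric_open_is_ramsey (S : RSpace) (hS : S.Axioms) (X : Set S.R)
    (hX : S.MetricOpen X) (a : S.AR) (A : S.R) (hne : (S.nbhd a A).Nonempty) :
    ∃ B ∈ S.nbhd a A, (S.nbhd a B ⊆ X ∨ ∀ C ∈ S.nbhd a B, C ∉ X) := by
  classical
  obtain ⟨h1, h2, h3, h4i, h4ii, h5, h6, mc⟩ := hS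
  obtain ⟨C0, hC0A, l, hC0l⟩ := hne
  -- Phase 1: decide every relevant approximation.
  set H1 : ℕ → S.AR → S.R → Prop := fun k b next =>
    (S.IsDepth next b k ∧ ∃ C m, S.le C next ∧ l ≤ m ∧ S.r m C = b ∧ S.r l C = a) →
      auxAcc S X b next ∨ auxRej S X b next with hH1def
  have Hpers1 : ∀ k b next next', next' ∈ S.nbhd (S.r k next) next →
      H1 k b next → H1 k b next' := by
    intro k b next next' hmem h hyp
    obtain ⟨hd', C, m, hCle, hlm, hCb, hCa⟩ := hyp
    have hagree : ∀ i ≤ k, S.r i next' = S.r i next := aux_nbhdN_agree h3 hmem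
    rcases h ⟨aux_isDepth_congr (fun i hi => (hagree i hi).symm) hd',
        C, m, S.le_trans _ _ _ hCle hmem.1, hlm, hCb, hCa⟩ with hA | hR
    · exact Or.inl (aux_acc_anti hmem.1 hA)
    · exact Or.inr (aux_rej_anti h3 h4i h5 hmem.1 hR)
  have PB1 : ∀ cur, S.le cur C0 → ∀ k b, ∃ next, next ∈ S.nbhd (S.r k cur) cur ∧
      (next = cur ∨ ∃ b' C m, l ≤ m ∧ S.r m C = b' ∧ S.r l C = a ∧ S.IsDepth next b' k) ∧
      H1 k b next := by
    intro cur _ k b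
    by_cases hg : S.IsDepth cur b k ∧ ∃ C m, S.le C cur ∧ l ≤ m ∧ S.r m C = b ∧ S.r l C = a
    · by_cases hacc : ∃ C', C' ∈ S.nbhd (S.r k cur) cur ∧ auxAcc S X b C'
      · obtain ⟨C', hC'm, hC'a⟩ := hacc
        obtain ⟨hd, C, m, _, hlm, hCb, hCa⟩ := hg
        exact ⟨C', hC'm, Or.inr ⟨b, C, m, hlm, hCb, hCa,
          aux_isDepth_congr (aux_nbhdN_agree h3 hC'm) hd⟩, fun _ => Or.inl hC'a⟩
      · refine ⟨cur, aux_self_mem cur k, Or.inl rfl, fun _ => Or.inr ?_⟩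
        intro n hdn W hW hAW
        have hnk : n = k := aux_depth_unique hdn hg.1
        subst hnk
        exact hacc ⟨W, hW, hAW⟩
    · exact ⟨cur, aux_self_mem cur k, Or.inl rfl, fun hyp => absurd hyp hg⟩
  obtain ⟨D, hDC0, hDa, COV1⟩ :=
    aux_master h2 h3 h4i h4ii h5 mc a l C0 ⟨C0, S.le_refl C0, l, hC0l⟩ H1 Hpers1 PB1
  have hDA : S.le D A := S.le_trans _ _ _ hDC0 hC0A
  have P1 : ∀ c d, S.IsDepth D c d →
      (∃ C m, S.le C D ∧ l ≤ m ∧ S.r m C = c ∧ S.r l C = a) →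
      auxAcc S X c D ∨ auxRej S X c D := by
    rintro c d hd ⟨C, m, hCD, hlm, hCc, hCa⟩
    obtain ⟨W, hDW, hagree, hH⟩ := COV1 c d hd
    rcases hH ⟨aux_isDepth_congr hagree hd, C, m, S.le_trans _ _ _ hCD hDW,
        hlm, hCc, hCa⟩ with hA | hR
    · exact Or.inl (aux_acc_anti hDW hA)
    · exact Or.inr (aux_rej_anti h3 h4i h5 hDW hR)
  obtain ⟨wD, hwDle, mwD, hmwD⟩ := hDa
  obtain ⟨-, hprefD⟩ := aux_approx_agree h3 (hmwD.trans hC0l.symm)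
  have hwDa : S.r l wD = a := (hprefD l le_rfl).trans hC0l
  obtain ⟨qa, hqa⟩ := (h4i wD D).mp hwDle l
  rw [hwDa] at hqa
  obtain ⟨da, hda⟩ := aux_depth_exists ⟨qa, hqa⟩
  rcases P1 a da hda ⟨wD, l, hwDle, le_rfl, hwDa, hwDa⟩ with hAa | hRa
  · -- `a` is accepted: the neighborhood is contained in `X`.
    refine ⟨wD, ⟨S.le_trans _ _ _ hwDle hDA, l, hwDa⟩, Or.inl ?_⟩
    intro Cc hCc
    obtain ⟨n, hn⟩ := hAa Cc (aux_nbhd_subset hwDle hCc)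
    exact hn Cc ⟨n, rfl⟩
  · -- `a` is rejected: Phase 2, kill all extensions.
    set H2 : ℕ → S.AR → S.R → Prop := fun k b next =>
      (S.IsDepth next b k ∧ ∃ C m, S.le C next ∧ l ≤ m ∧ S.r m C = b ∧ S.r l C = a) →
        ¬ auxRej S X b D ∨ ∃ m', (∃ C', S.r m' C' = b) ∧
          ∀ c, (∃ C'', C'' ∈ S.nbhd b next ∧ S.r (m' + 1) C'' = c) → auxRej S X c D
      with hH2def
    have Hpers2 : ∀ k b next next', next' ∈ S.nbhd (S.r k next) next →
        H2 k b next → H2 k b next' := by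
      intro k b next next' hmem h hyp
      obtain ⟨hd', C, m, hCle, hlm, hCb, hCa⟩ := hyp
      have hagree : ∀ i ≤ k, S.r i next' = S.r i next := aux_nbhdN_agree h3 hmem
      rcases h ⟨aux_isDepth_congr (fun i hi => (hagree i hi).symm) hd',
          C, m, S.le_trans _ _ _ hCle hmem.1, hlm, hCb, hCa⟩ with h' | ⟨m', hw, hext⟩
      · exact Or.inl h'
      · exact Or.inr ⟨m', hw, fun c hc => by
          obtain ⟨C'', hC''m, hr⟩ := hc
          exact hext c ⟨C'', aux_nbhd_subset hmem.1 hC''m, hr⟩⟩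
    have PB2 : ∀ cur, S.le cur D → ∀ k b, ∃ next, next ∈ S.nbhd (S.r k cur) cur ∧
        (next = cur ∨ ∃ b' C m, l ≤ m ∧ S.r m C = b' ∧ S.r l C = a ∧ S.IsDepth next b' k) ∧
        H2 k b next := by
      intro cur hcurD k b
      by_cases hg : S.IsDepth cur b k ∧ ∃ C m, S.le C cur ∧ l ≤ m ∧ S.r m C = b ∧ S.r l C = a
      · obtain ⟨hd, Cw, mw, hCwle, hlm, hCwb, hCwa⟩ := hg
        by_cases hR : auxRej S X b D
        · obtain ⟨B', hB'm, halt⟩ := h6 b cur k mw hd ⟨Cw, hCwb⟩ {c | auxAcc S X c D}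
          rcases halt with hone | htwo
          · exfalso
            have haccb : auxAcc S X b B' := by
              intro C hC
              have hCD : S.le C D :=
                S.le_trans _ _ _ hC.1 (S.le_trans _ _ _ hB'm.1 hcurD)
              exact hone (S.r (mw+1) C) ⟨C, hC, rfl⟩ C ⟨hCD, mw+1, rfl⟩
            exact aux_rej_anti h3 h4i h5 hcurD hR k hd B' hB'm haccb
          · refine ⟨B', hB'm, Or.inr ⟨b, Cw, mw, hlm, hCwb, hCwa,
              aux_isDepth_congr (aux_nbhdN_agree h3 hB'm) hd⟩,
              fun _ => Or.inr ⟨mw, ⟨Cw, hCwb⟩, ?_⟩⟩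
            rintro c ⟨C'', hC''m, hC''r⟩
            have hnacc : ¬ auxAcc S X c D := htwo c ⟨C'', hC''m, hC''r⟩
            have hC''D : S.le C'' D :=
              S.le_trans _ _ _ hC''m.1 (S.le_trans _ _ _ hB'm.1 hcurD)
            obtain ⟨q, hq⟩ := (h4i C'' D).mp hC''D (mw+1)
            rw [hC''r] at hq
            obtain ⟨dc, hdc⟩ := aux_depth_exists ⟨q, hq⟩
            have hC''l : S.r l C'' = a := by
              obtain ⟨_, mm, hmm⟩ := hC''m
              obtain ⟨-, hpref⟩ := aux_approx_agree h3 (hmm.trans hCwb.symm)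
              exact (hpref l hlm).trans hCwa
            rcases P1 c dc hdc ⟨C'', mw+1, hC''D, le_trans hlm (Nat.le_succ mw),
                hC''r, hC''l⟩ with hA | hRc
            · exact absurd hA hnacc
            · exact hRc
        · exact ⟨cur, aux_self_mem cur k, Or.inl rfl, fun _ => Or.inl hR⟩
      · exact ⟨cur, aux_self_mem cur k, Or.inl rfl, fun hyp => absurd hyp hg⟩
    obtain ⟨E, hED, hEa, COV2⟩ :=
      aux_master h2 h3 h4i h4ii h5 mc a l D ⟨wD, hwDle, l, hwDa⟩ H2 Hpers2 PB2
    have P2 : ∀ C, C ∈ S.nbhd a E → ∀ n, l ≤ n → auxRej S X (S.r n C) D := by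
      intro C hC
      have hCl : S.r l C = a := by
        obtain ⟨_, m, hm⟩ := hC
        obtain ⟨-, hpref⟩ := aux_approx_agree h3 (hm.trans hC0l.symm)
        exact (hpref l le_rfl).trans hC0l
      intro n hn
      induction n, hn using Nat.le_induction with
      | base => rw [hCl]; exact hRa
      | succ n hln ih =>
        obtain ⟨q, hq⟩ := (h4i C E).mp hC.1 n
        obtain ⟨d, hd⟩ := aux_depth_exists ⟨q, hq⟩
        obtain ⟨W, hEW, hagree, hH⟩ := COV2 (S.r n C) d hd
        rcases hH ⟨aux_isDepth_congr hagree hd, C, n, S.le_trans _ _ _ hC.1 hEW,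
            hln, rfl, hCl⟩ with hno | ⟨m', ⟨C', hC'⟩, hext⟩
        · exact absurd ih hno
        · obtain ⟨rfl, -⟩ := aux_approx_agree h3 hC'
          exact hext (S.r (m'+1) C) ⟨C, ⟨S.le_trans _ _ _ hC.1 hEW, m', rfl⟩, rfl⟩
    obtain ⟨wE, hwEle, mwE, hmwE⟩ := hEa
    obtain ⟨-, hprefE⟩ := aux_approx_agree h3 (hmwE.trans hC0l.symm)
    have hwEa : S.r l wE = a := (hprefE l le_rfl).trans hC0l
    refine ⟨wE, ⟨S.le_trans _ _ _ hwEle (S.le_trans _ _ _ hED hDA), l, hwEa⟩, Or.inr ?_⟩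
    intro Cc hCc hCcX
    have hCcE : Cc ∈ S.nbhd a E := aux_nbhd_subset hwEle hCc
    obtain ⟨n0, hn0⟩ := hX Cc hCcX
    have hF0 : S.r n0 Cc ∈ auxFam S X := by
      rintro D' ⟨q, hq⟩
      obtain ⟨-, hpref⟩ := aux_approx_agree h3 hq
      exact hn0 D' (hpref n0 le_rfl)
    have hFm : S.r (max n0 l) Cc ∈ auxFam S X := aux_fam_up h3 hF0 (le_max_left n0 l)
    have hRm := P2 Cc hCcE (max n0 l) (le_max_right n0 l)
    obtain ⟨q, hq⟩ := (h4i Cc D).mp (S.le_trans _ _ _ hCcE.1 hED) (max n0 l)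
    obtain ⟨dd, hdd⟩ := aux_depth_exists ⟨q, hq⟩
    refine hRm dd hdd D (aux_self_mem D dd) ?_
    intro C' hC'
    obtain ⟨-, mm, hmm⟩ := hC'
    exact ⟨mm, by rw [hmm]; exact hFm⟩
end
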